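/- The generating function g(x) = ∑_{n≥0} μ_n x^n of μ_n = ∑_{k=0}^n C(n+k,2k)·Cat(k)·α^{n-k} β^k satisfies the quadratic equation βx·g(x)^2 - (1-αx)·g(x) + 1 = 0 as formal power series. -/

import Mathlib

open Finset

lemma lower_vandermonde (r : ℕ) : ∀ (s t : ℕ),
    ∑ i ∈ range (s + 1), i.choose r * (s - i).choose t = (s + 1).choose (r + t + 1) := by
  intro s
  induction s with
  | zero =>
      intro t
      rcases r with _ | r
      · rcases t with _ | t
        · simp
        · rw [Nat.choose_eq_zero_of_lt (show 1 < 0 + (t + 1) + 1 by omega)]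
          simp [Nat.choose_eq_zero_of_lt (show 0 < t + 1 by omega)]
      · rw [Nat.choose_eq_zero_of_lt (show 1 < r + 1 + t + 1 by omega)]
        simp [Nat.choose_eq_zero_of_lt (show 0 < r + 1 by omega)]
  | succ s ih =>
      intro t
      rcases t with _ | t
      · rw [Finset.sum_range_succ]
        have h1 : ∀ i ∈ range (s + 1), i.choose r * (s + 1 - i).choose 0
            = i.choose r * (s - i).choose 0 := fun i _ => by simp
        rw [Finset.sum_congr rfl h1, ih 0]
        rw [Nat.choose_succ_succ' (s + 1) r]
        simp [Nat.add_comm]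
      · rw [Finset.sum_range_succ]
        have h1 : ∀ i ∈ range (s + 1), i.choose r * (s + 1 - i).choose (t + 1)
            = i.choose r * (s - i).choose t + i.choose r * (s - i).choose (t + 1) := by
          intro i hi
          rw [mem_range] at hi
          rw [show s + 1 - i = (s - i) + 1 by omega, Nat.choose_succ_succ', Nat.mul_add]
        rw [Finset.sum_congr rfl h1, Finset.sum_add_distrib, ih t, ih (t + 1)]
        rw [show r + (t + 1) + 1 = r + t + 1 + 1 by omega,
          Nat.choose_succ_succ' (s + 1) (r + t + 1)]
        simp

lemma shifted_vandermonde (a b m : ℕ) :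
    ∑ i ∈ range (m + 1), (i + a).choose (2 * a) * (m - i + b).choose (2 * b)
      = (m + a + b + 1).choose (2 * a + 2 * b + 1) := by
  have key := lower_vandermonde (2 * a) (m + a + b) (2 * b)
  rw [← key]
  have hsub : Ico a (a + m + 1) ⊆ range (m + a + b + 1) := by
    intro x hx; rw [mem_Ico] at hx; rw [mem_range]; omega
  have hzero : ∀ x ∈ range (m + a + b + 1), x ∉ Ico a (a + m + 1) →
      x.choose (2 * a) * (m + a + b - x).choose (2 * b) = 0 := by
    intro x hx hnx
    rw [mem_range] at hx
    by_cases hlt : x < a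
    · rw [Nat.choose_eq_zero_of_lt (show x < 2 * a by omega), zero_mul]
    · have h2 : a + m + 1 ≤ x := by
        by_contra hc
        push_neg at hc
        exact hnx (mem_Ico.mpr ⟨by omega, by omega⟩)
      rw [Nat.choose_eq_zero_of_lt (show m + a + b - x < 2 * b by omega), mul_zero]
  rw [← Finset.sum_subset hsub hzero, Finset.sum_Ico_eq_sum_range]
  have : a + m + 1 - a = m + 1 := by omega
  rw [this]
  refine Finset.sum_congr rfl fun i hi => ?_
  rw [mem_range] at hi
  rw [Nat.add_comm a i, show m + a + b - (i + a) = m - i + b by omega]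

lemma triangle_unconditional {M : Type*} [AddCommMonoid M] (f : ℕ → ℕ → M) (m : ℕ) :
    ∑ l ∈ range (m + 1), ∑ a ∈ range (l + 1), f a (l - a)
      = ∑ a ∈ range (m + 1), ∑ b ∈ range (m + 1 - a), f a b := by
  induction m with
  | zero => simp
  | succ m ih =>
      rw [Finset.sum_range_succ, ih, Finset.sum_range_succ (fun a => ∑ b ∈ range (m + 2 - a), f a b)]
      have h1 : ∀ a ∈ range (m + 1), ∑ b ∈ range (m + 2 - a), f a b
          = ∑ b ∈ range (m + 1 - a), f a b + f a (m + 1 - a) := by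
        intro a ha
        rw [mem_range] at ha
        rw [show m + 2 - a = (m + 1 - a) + 1 by omega, Finset.sum_range_succ]
      rw [Finset.sum_congr rfl h1, Finset.sum_add_distrib]
      rw [Finset.sum_range_succ (fun a => f a (m + 1 - a))]
      simp [add_assoc]

lemma triangle {M : Type*} [AddCommMonoid M] (f : ℕ → ℕ → M) (m : ℕ)
    (hf : ∀ a b, m < a + b → f a b = 0) :
    ∑ l ∈ range (m + 1), ∑ a ∈ range (l + 1), f a (l - a)
      = ∑ a ∈ range (m + 1), ∑ b ∈ range (m + 1), f a b := by
  rw [triangle_unconditional]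
  refine Finset.sum_congr rfl fun a ha => ?_
  rw [mem_range] at ha
  refine Finset.sum_subset (fun b hb => by rw [mem_range] at *; omega) fun b hb hnb => ?_
  rw [mem_range] at hb hnb
  exact hf a b (by omega)

lemma moments_rec {R : Type*} [CommRing R] (α β : R) (m : ℕ) :
    (∑ k ∈ range (m + 2),
        (((m + 1 + k).choose (2 * k) * catalan k : ℕ) : R) * α ^ (m + 1 - k) * β ^ k)
      = α * (∑ k ∈ range (m + 1),
            (((m + k).choose (2 * k) * catalan k : ℕ) : R) * α ^ (m - k) * β ^ k)
        + β * ∑ p ∈ antidiagonal m,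
            (∑ a ∈ range (p.1 + 1),
              (((p.1 + a).choose (2 * a) * catalan a : ℕ) : R) * α ^ (p.1 - a) * β ^ a)
          * (∑ b ∈ range (p.2 + 1),
              (((p.2 + b).choose (2 * b) * catalan b : ℕ) : R) * α ^ (p.2 - b) * β ^ b) := by
  -- the extended moment sums
  set c : ℕ → ℕ → R := fun i a => (((i + a).choose (2 * a) * catalan a : ℕ) : R) * α ^ (i - a) * β ^ a with hc
  -- Step A : extend inner sums to `range (m+1)`
  have hμ : ∀ i, i ≤ m → (∑ a ∈ range (i + 1), c i a) = ∑ a ∈ range (m + 1), c i a := by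
    intro i hi
    refine Finset.sum_subset (fun x hx => by rw [mem_range] at *; omega) ?_
    intro a ha hna
    rw [mem_range] at ha hna
    simp only [hc, Nat.choose_eq_zero_of_lt (show i + a < 2 * a by omega)]
    simp
  -- Step D : the inner antidiagonal sum
  have hinner : ∀ a b : ℕ, (∑ p ∈ antidiagonal m, c p.1 a * c p.2 b)
      = ((catalan a * catalan b * (m + a + b + 1).choose (2 * a + 2 * b + 1) : ℕ) : R)
          * α ^ (m - (a + b)) * β ^ (a + b) := by
    intro a b
    have hterm : ∀ p ∈ antidiagonal m, c p.1 a * c p.2 b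
        = (((p.1 + a).choose (2 * a) * (p.2 + b).choose (2 * b) * (catalan a * catalan b) : ℕ) : R)
            * α ^ (m - (a + b)) * β ^ (a + b) := by
      intro p hp
      rw [Finset.HasAntidiagonal.mem_antidiagonal] at hp
      by_cases h1 : p.1 < a
      · simp only [hc, Nat.choose_eq_zero_of_lt (show p.1 + a < 2 * a by omega)]
        push_cast
        ring
      · by_cases h2 : p.2 < b
        · simp only [hc, Nat.choose_eq_zero_of_lt (show p.2 + b < 2 * b by omega)]
          push_cast
          ring
        · have e1 : α ^ (p.1 - a) * α ^ (p.2 - b) = α ^ (m - (a + b)) := by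
            rw [← pow_add]
            congr 1
            omega
          simp only [hc]
          rw [← e1]
          push_cast
          ring
    rw [Finset.sum_congr rfl hterm, ← Finset.sum_mul, ← Finset.sum_mul, ← Nat.cast_sum]
    have hnat : (∑ p ∈ antidiagonal m,
        (p.1 + a).choose (2 * a) * (p.2 + b).choose (2 * b) * (catalan a * catalan b))
        = catalan a * catalan b * (m + a + b + 1).choose (2 * a + 2 * b + 1) := by
      rw [← Finset.sum_mul, Finset.Nat.sum_antidiagonal_eq_sum_range_succ_mk,
        shifted_vandermonde]
      ring
    rw [hnat]
  -- Step B/C : expand the product of sums and swap summation order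
  have hdouble : (∑ p ∈ antidiagonal m,
        (∑ a ∈ range (p.1 + 1), c p.1 a) * (∑ b ∈ range (p.2 + 1), c p.2 b))
      = ∑ a ∈ range (m + 1), ∑ b ∈ range (m + 1),
          ((catalan a * catalan b * (m + a + b + 1).choose (2 * a + 2 * b + 1) : ℕ) : R)
            * α ^ (m - (a + b)) * β ^ (a + b) := by
    have h1 : ∀ p ∈ antidiagonal m,
        (∑ a ∈ range (p.1 + 1), c p.1 a) * (∑ b ∈ range (p.2 + 1), c p.2 b)
          = ∑ a ∈ range (m + 1), ∑ b ∈ range (m + 1), c p.1 a * c p.2 b := by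
      intro p hp
      rw [Finset.HasAntidiagonal.mem_antidiagonal] at hp
      rw [hμ p.1 (by omega), hμ p.2 (by omega), Finset.sum_mul_sum]
    rw [Finset.sum_congr rfl h1, Finset.sum_comm]
    refine Finset.sum_congr rfl fun a _ => ?_
    rw [Finset.sum_comm]
    exact Finset.sum_congr rfl fun b _ => hinner a b
  rw [hdouble]
  -- Step F : the triangle identity for the right-hand double sum
  set H : ℕ → ℕ → R := fun a b =>
    ((catalan a * catalan b * (m + a + b + 1).choose (2 * a + 2 * b + 1) : ℕ) : R)
      * α ^ (m - (a + b)) * β ^ (a + b + 1) with hH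
  have hβ : β * (∑ a ∈ range (m + 1), ∑ b ∈ range (m + 1),
      ((catalan a * catalan b * (m + a + b + 1).choose (2 * a + 2 * b + 1) : ℕ) : R)
        * α ^ (m - (a + b)) * β ^ (a + b))
      = ∑ a ∈ range (m + 1), ∑ b ∈ range (m + 1), H a b := by
    rw [Finset.mul_sum]
    refine Finset.sum_congr rfl fun a _ => ?_
    rw [Finset.mul_sum]
    refine Finset.sum_congr rfl fun b _ => ?_
    simp only [hH]
    rw [pow_succ]
    ring
  have htri : (∑ l ∈ range (m + 1),
      (((m + l + 1).choose (2 * l + 1) * catalan (l + 1) : ℕ) : R) * α ^ (m - l) * β ^ (l + 1))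
      = ∑ a ∈ range (m + 1), ∑ b ∈ range (m + 1), H a b := by
    rw [← triangle H m (fun a b hab => by
      simp only [hH, Nat.choose_eq_zero_of_lt (show m + a + b + 1 < 2 * a + 2 * b + 1 by omega)]
      simp)]
    refine Finset.sum_congr rfl fun l hl => ?_
    rw [mem_range] at hl
    rw [catalan_succ', Finset.Nat.sum_antidiagonal_eq_sum_range_succ_mk]
    push_cast [Finset.mul_sum, Finset.sum_mul]
    refine Finset.sum_congr rfl fun a ha => ?_
    rw [mem_range] at ha
    simp only [hH]
    rw [show m + a + (l - a) + 1 = m + l + 1 by omega,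
      show 2 * a + 2 * (l - a) + 1 = 2 * l + 1 by omega,
      show m - (a + (l - a)) = m - l by omega,
      show a + (l - a) + 1 = l + 1 by omega]
    push_cast
    ring
  rw [hβ, ← htri]
  -- Step E : split off the `k = 0` terms and apply Pascal's rule
  have hz1 : (((m + 1 + 0).choose (2 * 0) * catalan 0 : ℕ) : R) * α ^ (m + 1 - 0) * β ^ 0
      = α ^ (m + 1) := by simp
  have hz2 : (((m + 0).choose (2 * 0) * catalan 0 : ℕ) : R) * α ^ (m - 0) * β ^ 0 = α ^ m := by
    simp
  -- extend the `range m` sum on the right to `range (m+1)`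
  have hext : (∑ l ∈ range m,
      (((m + (l + 1)).choose (2 * (l + 1)) * catalan (l + 1) : ℕ) : R)
        * α ^ (m - (l + 1)) * β ^ (l + 1))
      = ∑ l ∈ range (m + 1),
      (((m + (l + 1)).choose (2 * (l + 1)) * catalan (l + 1) : ℕ) : R)
        * α ^ (m - (l + 1)) * β ^ (l + 1) := by
    refine Finset.sum_subset (fun x hx => by rw [mem_range] at *; omega) ?_
    intro l hl hnl
    rw [mem_range] at hl hnl
    rw [Nat.choose_eq_zero_of_lt (show m + (l + 1) < 2 * (l + 1) by omega)]
    simp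
  -- combine everything termwise using Pascal's rule
  have hsplit : ∀ l ∈ range (m + 1),
      (((m + 1 + (l + 1)).choose (2 * (l + 1)) * catalan (l + 1) : ℕ) : R)
          * α ^ (m + 1 - (l + 1)) * β ^ (l + 1)
        = α * ((((m + (l + 1)).choose (2 * (l + 1)) * catalan (l + 1) : ℕ) : R)
            * α ^ (m - (l + 1)) * β ^ (l + 1))
          + (((m + l + 1).choose (2 * l + 1) * catalan (l + 1) : ℕ) : R)
            * α ^ (m - l) * β ^ (l + 1) := by
    intro l hl
    rw [mem_range] at hl
    have hpascal : (m + 1 + (l + 1)).choose (2 * (l + 1))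
        = (m + l + 1).choose (2 * l + 1) + (m + (l + 1)).choose (2 * (l + 1)) := by
      rw [show m + 1 + (l + 1) = (m + l + 1) + 1 by omega,
        show 2 * (l + 1) = (2 * l + 1) + 1 by omega, Nat.choose_succ_succ', ← Nat.add_assoc]
    rw [hpascal, show m + 1 - (l + 1) = m - l by omega]
    by_cases hlm : l < m
    · rw [show m - l = (m - (l + 1)) + 1 by omega]
      push_cast
      ring
    · rw [Nat.choose_eq_zero_of_lt (show m + (l + 1) < 2 * (l + 1) by omega)]
      push_cast
      ring
  rw [Finset.sum_range_succ' _ (m + 1), hz1]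
  conv_rhs => rw [Finset.sum_range_succ' _ m]
  rw [hz2, mul_add, hext, Finset.sum_congr rfl hsplit, Finset.sum_add_distrib, Finset.mul_sum]
  ring

/-- The generating function `g` of the moments
`μ_n = ∑_{k=0}^n C(n+k,2k)·Cat(k)·α^{n-k}β^k` satisfies `βx g² - (1-αx) g + 1 = 0`. -/
theorem moments_gf_quadratic {R : Type*} [CommRing R] (α β : R) :
    let g : PowerSeries R := PowerSeries.mk fun n =>
      ∑ k ∈ Finset.range (n + 1),
        (((n + k).choose (2 * k) * catalan k : ℕ) : R) * α ^ (n - k) * β ^ k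
    PowerSeries.C β * PowerSeries.X * g ^ 2
      - (1 - PowerSeries.C α * PowerSeries.X) * g + 1 = 0 := by
  intro g
  have hg : ∀ n, (PowerSeries.coeff n) g
      = ∑ k ∈ Finset.range (n + 1),
          (((n + k).choose (2 * k) * catalan k : ℕ) : R) * α ^ (n - k) * β ^ k :=
    fun n => PowerSeries.coeff_mk n _
  apply PowerSeries.ext
  intro n
  rcases n with _ | m
  · have h1 : (PowerSeries.coeff 0) (PowerSeries.C β * PowerSeries.X * g ^ 2) = 0 := by
      rw [mul_assoc, PowerSeries.coeff_C_mul, PowerSeries.coeff_zero_X_mul, mul_zero]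
    have h2 : (PowerSeries.coeff 0)
        ((1 - PowerSeries.C α * PowerSeries.X) * g) = 1 := by
      rw [sub_mul, one_mul, map_sub, mul_assoc, PowerSeries.coeff_C_mul,
        PowerSeries.coeff_zero_X_mul, mul_zero, sub_zero, hg 0]
      simp
    rw [map_add, map_sub, h1, h2]
    simp
  · have h1 : (PowerSeries.coeff (m + 1)) (PowerSeries.C β * PowerSeries.X * g ^ 2)
        = β * ∑ p ∈ Finset.HasAntidiagonal.antidiagonal m,
            (PowerSeries.coeff p.1) g * (PowerSeries.coeff p.2) g := by
      rw [mul_assoc, PowerSeries.coeff_C_mul, PowerSeries.coeff_succ_X_mul, sq,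
        PowerSeries.coeff_mul]
    have h2 : (PowerSeries.coeff (m + 1))
        ((1 - PowerSeries.C α * PowerSeries.X) * g)
        = (PowerSeries.coeff (m + 1)) g - α * (PowerSeries.coeff m) g := by
      rw [sub_mul, one_mul, map_sub, mul_assoc, PowerSeries.coeff_C_mul,
        PowerSeries.coeff_succ_X_mul]
    have hsum : (∑ p ∈ Finset.HasAntidiagonal.antidiagonal m,
        (PowerSeries.coeff p.1) g * (PowerSeries.coeff p.2) g)
        = ∑ p ∈ Finset.HasAntidiagonal.antidiagonal m,
            (∑ a ∈ Finset.range (p.1 + 1),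
              (((p.1 + a).choose (2 * a) * catalan a : ℕ) : R) * α ^ (p.1 - a) * β ^ a)
          * (∑ b ∈ Finset.range (p.2 + 1),
              (((p.2 + b).choose (2 * b) * catalan b : ℕ) : R) * α ^ (p.2 - b) * β ^ b) :=
      Finset.sum_congr rfl fun p _ => by rw [hg p.1, hg p.2]
    rw [map_add, map_sub, h1, h2, hsum, hg (m + 1), hg m]
    have key := moments_rec α β m
    rw [show m + 2 = m + 1 + 1 by omega] at key
    simp only [PowerSeries.coeff_one, Nat.succ_ne_zero, if_false, map_zero]
    rw [key]
    ring
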